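/- Let (σ, α) be a combinatorial map on a nonempty finite set H rooted at r ∈ H, with an orientation (I, O) and backward function β. Then every element of I is the extremity of some left-path if and only if for every h ∈ H there exists an integer q > 0 with β^q(h) = r. -/

import Mathlib

/-- `(σ,α)` is a combinatorial map. -/
def IsCombMap {X : Type*} (σ α : Equiv.Perm X) : Prop :=
  (∀ h, α h ≠ h) ∧ (∀ h, α (α h) = h) ∧
    ∀ x y : X, ∃ g ∈ Subgroup.closure ({σ, α} : Set (Equiv.Perm X)), g x = y

/-- The backward function of an orientation with ingoing set `I`:
`β(h) = σ(α h)` if `h ∈ I` and `β(h) = σ h` otherwise. -/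
noncomputable def backward {X : Type*} (σ α : Equiv.Perm X) (I : Set X) (h : X) : X := by
  classical
  exact if h ∈ I then σ (α h) else σ h

/-- `h 1, …, h k` (with `h 0 = r`) is a left-path: a sequence of pairwise distinct
ingoing half-edges such that each `h (i-1)` is reached from `α (h i)` by iterating `σ`
while only meeting outgoing half-edges strictly before arrival. -/
def IsLeftPath {X : Type*} (σ α : Equiv.Perm X) (r : X) (I O : Set X)
    (k : ℕ) (h : ℕ → X) : Prop :=
  1 ≤ k ∧ h 0 = r ∧ (∀ i, 1 ≤ i → i ≤ k → h i ∈ I) ∧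
    (∀ i j, 1 ≤ i → i < j → j ≤ k → h i ≠ h j) ∧
    ∀ i, 1 ≤ i → i ≤ k →
      ∃ q : ℕ, 0 < q ∧ h (i - 1) = (⇑σ)^[q] (α (h i)) ∧
        ∀ p, p < q → (⇑σ)^[p] (α (h i)) ∈ O

section Aux

variable {H : Type*} (σ α : Equiv.Perm H) (I O : Set H)

lemma backward_of_mem {z : H} (hz : z ∈ I) : backward σ α I z = σ (α z) := by
  unfold backward; rw [if_pos hz]

lemma backward_of_not_mem {z : H} (hz : z ∉ I) : backward σ α I z = σ z := by
  unfold backward; rw [if_neg hz]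

lemma mem_O_of_not_mem_I (hpart : I ∪ O = Set.univ) {z : H} (hz : z ∉ I) : z ∈ O := by
  have : z ∈ I ∪ O := hpart ▸ Set.mem_univ z
  rcases this with h | h
  · exact absurd h hz
  · exact h

lemma not_mem_I_of_mem_O (hdisj : I ∩ O = ∅) {z : H} (hz : z ∈ O) : z ∉ I := by
  intro h
  have : z ∈ I ∩ O := ⟨h, hz⟩
  rw [hdisj] at this
  exact this

/-- L2: if `z ∈ I` and early backward-iterates are outgoing, backward iterates
agree with `σ`-iterates of `α z`. -/
lemma beta_eq_sigma_of_beta_O (hdisj : I ∩ O = ∅) {z : H} (hz : z ∈ I) (j : ℕ)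
    (hO : ∀ p, 1 ≤ p → p < j → (backward σ α I)^[p] z ∈ O) :
    ∀ s, 1 ≤ s → s ≤ j → (backward σ α I)^[s] z = (⇑σ)^[s] (α z) := by
  intro s hs1 hsj
  induction s with
  | zero => omega
  | succ s ih =>
    rcases Nat.eq_or_lt_of_le hs1 with h1 | h1
    · simp [← h1, backward_of_mem σ α I hz]
    · have hs : 1 ≤ s := by omega
      have ihs := ih hs (by omega)
      rw [Function.iterate_succ_apply', Function.iterate_succ_apply', ihs]
      have hmem : (⇑σ)^[s] (α z) ∈ O := by
        rw [← ihs]; exact hO s hs (by omega)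
      rw [backward_of_not_mem σ α I (not_mem_I_of_mem_O I O hdisj hmem)]

/-- L2': if `z ∈ I` and early `σ`-iterates of `α z` are outgoing, backward iterates
agree with `σ`-iterates of `α z`. -/
lemma beta_eq_sigma_of_sigma_O (hdisj : I ∩ O = ∅) {z : H} (hz : z ∈ I) (j : ℕ)
    (hO : ∀ p, p < j → (⇑σ)^[p] (α z) ∈ O) :
    ∀ s, 1 ≤ s → s ≤ j → (backward σ α I)^[s] z = (⇑σ)^[s] (α z) := by
  intro s hs1 hsj
  induction s with
  | zero => omega
  | succ s ih =>
    rcases Nat.eq_or_lt_of_le hs1 with h1 | h1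
    · simp [← h1, backward_of_mem σ α I hz]
    · have hs : 1 ≤ s := by omega
      have ihs := ih hs (by omega)
      rw [Function.iterate_succ_apply', Function.iterate_succ_apply', ihs]
      have hmem : (⇑σ)^[s] (α z) ∈ O := hO s (by omega)
      rw [backward_of_not_mem σ α I (not_mem_I_of_mem_O I O hdisj hmem)]

/-- L3: if `z ∈ O` and early `σ`-iterates of `z` are outgoing, backward iterates
agree with `σ`-iterates. -/
lemma beta_eq_sigma_of_O (hdisj : I ∩ O = ∅) {z : H} (hz : z ∈ O) (j : ℕ)
    (hO : ∀ p, 1 ≤ p → p < j → (⇑σ)^[p] z ∈ O) :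
    ∀ s, s ≤ j → (backward σ α I)^[s] z = (⇑σ)^[s] z := by
  intro s hsj
  induction s with
  | zero => rfl
  | succ s ih =>
    rw [Function.iterate_succ_apply', Function.iterate_succ_apply', ih (by omega)]
    have hmem : (⇑σ)^[s] z ∈ O := by
      rcases Nat.eq_zero_or_pos s with h | h
      · simpa [h] using hz
      · exact hO s h (by omega)
    rw [backward_of_not_mem σ α I (not_mem_I_of_mem_O I O hdisj hmem)]

/-- L1: distinctness of backward iterates before the minimal return time. -/
lemma iterates_injOn {r x : H} {q : ℕ} (hqr : (backward σ α I)^[q] x = r)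
    (hmin : ∀ j, 0 < j → j < q → (backward σ α I)^[j] x ≠ r) :
    ∀ a b, a < b → b < q → (backward σ α I)^[a] x ≠ (backward σ α I)^[b] x := by
  intro a b hab hbq heq
  set β := backward σ α I with hβ
  set p := b - a with hp
  have hp0 : 0 < p := by omega
  have hper : Function.IsPeriodicPt β p (β^[a] x) := by
    show β^[p] (β^[a] x) = β^[a] x
    rw [← Function.iterate_add_apply, (by omega : p + a = b)]
    exact heq.symm
  set c := (q - a) % p + a with hc
  have hq : β^[c] x = β^[q] x := by
    rw [hc, Function.iterate_add_apply, hper.iterate_mod_apply,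
      ← Function.iterate_add_apply]
    congr 1
    omega
  have hcq : c < q := by
    have : (q - a) % p < p := Nat.mod_lt _ hp0
    omega
  rcases Nat.eq_zero_or_pos c with h0 | h0
  · -- a = 0 and r = x; then β^[p] x = x = r with 0 < p < q, contradiction
    have ha : a = 0 := by omega
    have hrx : r = x := by
      rw [← hqr, ← hq, h0]
      rfl
    have : β^[p] x = r := by
      have := hper
      rw [ha] at this
      simpa [hrx, Function.IsPeriodicPt, Function.IsFixedPt] using this
    exact hmin p hp0 (by omega) this
  · exact hmin c h0 hcq (by rw [hq, hqr])

end Aux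

section Main

variable {H : Type*} (σ α : Equiv.Perm H) {I O : Set H} {r : H}

/-- Composing the steps of a left-path: the extremity reaches the root by `β`. -/
lemma path_to_reach (hpart : I ∪ O = Set.univ) (hdisj : I ∩ O = ∅)
    {k : ℕ} {h : ℕ → H} (hp : IsLeftPath σ α r I O k h) :
    ∃ q : ℕ, 0 < q ∧ (backward σ α I)^[q] (h k) = r := by
  obtain ⟨hk1, h0, hmem, -, hstep⟩ := hp
  have key : ∀ d, d ≤ k → ∃ Q, d ≤ Q ∧ (backward σ α I)^[Q] (h k) = h (k - d) := by
    intro d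
    induction d with
    | zero => intro _; exact ⟨0, le_refl _, by simp⟩
    | succ d ih =>
      intro hdk
      obtain ⟨Q, hdQ, hQ⟩ := ih (by omega)
      have hi1 : 1 ≤ k - d := by omega
      have hik : k - d ≤ k := by omega
      obtain ⟨qi, hqi0, hqi, hqiO⟩ := hstep (k - d) hi1 hik
      have hIi : h (k - d) ∈ I := hmem _ hi1 hik
      have hβ : (backward σ α I)^[qi] (h (k - d)) = (⇑σ)^[qi] (α (h (k - d))) :=
        beta_eq_sigma_of_sigma_O σ α I O hdisj hIi qi hqiO qi hqi0 (le_refl _)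
      refine ⟨qi + Q, by omega, ?_⟩
      rw [Function.iterate_add_apply, hQ, hβ, ← hqi,
        show k - (d + 1) = k - d - 1 from by omega]
  obtain ⟨Q, hQ1, hQ⟩ := key k (le_refl _)
  exact ⟨Q, by omega, by rwa [Nat.sub_self, h0] at hQ⟩

/-- Construction of a left-path from a minimal backward return time. -/
lemma construct (hpart : I ∪ O = Set.univ) (hdisj : I ∩ O = ∅) (hIO : α '' I = O) :
    ∀ q : ℕ, 0 < q → ∀ x ∈ I, (backward σ α I)^[q] x = r →
      (∀ j, 0 < j → j < q → (backward σ α I)^[j] x ≠ r) →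
      ∃ (k : ℕ) (h : ℕ → H), IsLeftPath σ α r I O k h ∧ h k = x ∧
        ∀ i, 1 ≤ i → i ≤ k → ∃ t, t < q ∧ h i = (backward σ α I)^[t] x := by
  intro q
  induction q using Nat.strong_induction_on with
  | _ q IH =>
  intro hq0 x hxI hqr hmin
  classical
  set β := backward σ α I with hβdef
  have hαxO : α x ∈ O := hIO ▸ ⟨x, hxI, rfl⟩
  by_cases hex : ∃ j, (1 ≤ j ∧ j < q) ∧ β^[j] x ∈ I
  · -- Case A: some earlier backward iterate is ingoing; recurse from the first one.
    obtain ⟨j₀, hj₀⟩ := hex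
    have hexm : ∃ m, 1 ≤ m ∧ β^[m] x ∈ I := ⟨j₀, hj₀.1.1, hj₀.2⟩
    set m := Nat.find hexm with hm
    obtain ⟨hm1, hmI⟩ := Nat.find_spec hexm
    have hmq : m < q := lt_of_le_of_lt (Nat.find_min' hexm ⟨hj₀.1.1, hj₀.2⟩) hj₀.1.2
    have hmO : ∀ p, 1 ≤ p → p < m → β^[p] x ∈ O := by
      intro p hp1 hpm
      refine mem_O_of_not_mem_I I O hpart ?_
      intro hpI
      exact Nat.find_min hexm hpm ⟨hp1, hpI⟩
    set y := β^[m] x with hy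
    have hyq : β^[q - m] y = r := by
      rw [hy, ← Function.iterate_add_apply, (by omega : q - m + m = q), hqr]
    have hymin : ∀ j, 0 < j → j < q - m → β^[j] y ≠ r := by
      intro j hj1 hjq
      rw [hy, ← Function.iterate_add_apply]
      exact hmin (j + m) (by omega) (by omega)
    obtain ⟨k, h, hpath, hky, hextra⟩ :=
      IH (q - m) (by omega) (by omega) y hmI hyq hymin
    obtain ⟨hk1, h0, hmem, hdist, hstep⟩ := hpath
    -- lift the extra property to iterates of x
    have hextra' : ∀ i, 1 ≤ i → i ≤ k → ∃ t, 1 ≤ t ∧ t < q ∧ h i = β^[t] x := by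
      intro i hi1 hik
      obtain ⟨t, ht, hht⟩ := hextra i hi1 hik
      refine ⟨t + m, by omega, by omega, ?_⟩
      rw [hht, hy, ← Function.iterate_add_apply]
    refine ⟨k + 1, fun i => if i ≤ k then h i else x, ⟨by omega, ?_, ?_, ?_, ?_⟩, ?_, ?_⟩
    · simp [h0, hk1]
    · intro i hi1 hik
      by_cases hik' : i ≤ k
      · simpa [hik'] using hmem i hi1 hik'
      · simp only [if_neg hik']
        exact hxI
    · intro i j hi1 hij hjk
      by_cases hjk' : j ≤ k
      · have hik' : i ≤ k := by omega
        simpa [hik', hjk'] using hdist i j hi1 hij hjk'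
      · have hjeq : j = k + 1 := by omega
        have hik' : i ≤ k := by omega
        simp only [if_pos hik', if_neg hjk']
        obtain ⟨t, ht1, htq, hht⟩ := hextra' i hi1 hik'
        rw [hht]
        intro hcontra
        exact iterates_injOn σ α I hqr hmin 0 t (by omega) htq (by simpa using hcontra.symm)
    · intro i hi1 hik
      by_cases hik' : i ≤ k
      · have : i - 1 ≤ k := by omega
        simpa [hik', this] using hstep i hi1 hik'
      · have hieq : i = k + 1 := by omega
        have hkk : i - 1 ≤ k := by omega
        simp only [if_neg hik', if_pos hkk]
        have hβσ : ∀ s, 1 ≤ s → s ≤ m → β^[s] x = (⇑σ)^[s] (α x) :=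
          beta_eq_sigma_of_beta_O σ α I O hdisj hxI m hmO
        refine ⟨m, by omega, ?_, ?_⟩
        · rw [hieq]
          simp only [Nat.add_sub_cancel]
          rw [hky, hy, hβσ m hm1 (le_refl _)]
        · intro p hpm
          rcases Nat.eq_zero_or_pos p with hp0 | hp0
          · simpa [hp0] using hαxO
          · rw [← hβσ p hp0 (by omega)]
            exact hmO p hp0 hpm
    · simp
    · intro i hi1 hik
      by_cases hik' : i ≤ k
      · obtain ⟨t, ht1, htq, hht⟩ := hextra' i hi1 hik'
        exact ⟨t, htq, by simpa [hik'] using hht⟩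
      · exact ⟨0, by omega, by simp [hik']⟩
  · -- Case B: all earlier iterates outgoing; single-step path.
    push_neg at hex
    have hO : ∀ p, 1 ≤ p → p < q → β^[p] x ∈ O := by
      intro p hp1 hpq
      exact mem_O_of_not_mem_I I O hpart (hex p ⟨hp1, hpq⟩)
    have hβσ : ∀ s, 1 ≤ s → s ≤ q → β^[s] x = (⇑σ)^[s] (α x) :=
      beta_eq_sigma_of_beta_O σ α I O hdisj hxI q hO
    refine ⟨1, fun i => if i = 0 then r else x,
      ⟨le_refl _, if_pos rfl, ?_, ?_, ?_⟩, if_neg one_ne_zero, ?_⟩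
    · intro i hi1 hik
      show (if i = 0 then r else x) ∈ I
      rw [if_neg (by omega : ¬ i = 0)]
      exact hxI
    · intro i j hi1 hij hjk
      omega
    · intro i hi1 hik
      have hieq : i = 1 := by omega
      subst hieq
      show ∃ q', 0 < q' ∧ (if 1 - 1 = 0 then r else x) =
          (⇑σ)^[q'] (α (if 1 = 0 then r else x)) ∧
          ∀ p, p < q' → (⇑σ)^[p] (α (if 1 = 0 then r else x)) ∈ O
      rw [if_pos rfl, if_neg one_ne_zero]
      refine ⟨q, hq0, ?_, ?_⟩
      · rw [← hβσ q hq0 (le_refl _), hqr]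
      · intro p hpq
        rcases Nat.eq_zero_or_pos p with hp0 | hp0
        · simpa [hp0] using hαxO
        · rw [← hβσ p hp0 (by omega)]
          exact hO p hp0 hpq
    · intro i hi1 hik
      refine ⟨0, hq0, ?_⟩
      show (if i = 0 then r else x) = β^[0] x
      rw [if_neg (by omega : ¬ i = 0)]
      rfl

end Main

/-- every ingoing half-edge is the extremity of a left-path if and
only if every half-edge reaches the root by iterating the backward function. -/
theorem left_connected_iff_backward_reaches_root {H : Type*} [Fintype H] [Nonempty H]
    (σ α : Equiv.Perm H) (hmap : IsCombMap σ α) (r : H) (I O : Set H)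
    (hpart : I ∪ O = Set.univ) (hdisj : I ∩ O = ∅) (hIO : α '' I = O) :
    (∀ x ∈ I, ∃ (k : ℕ) (h : ℕ → H), IsLeftPath σ α r I O k h ∧ h k = x) ↔
      ∀ x : H, ∃ q : ℕ, 0 < q ∧ (backward σ α I)^[q] x = r := by
  classical
  obtain ⟨-, hinv, -⟩ := hmap
  constructor
  · intro hL x
    have reach : ∀ z ∈ I, ∃ q, 0 < q ∧ (backward σ α I)^[q] z = r := by
      intro z hz
      obtain ⟨k, h, hp, hk⟩ := hL z hz
      obtain ⟨q, hq, hqr⟩ := path_to_reach σ α hpart hdisj hp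
      exact ⟨q, hq, by rwa [hk] at hqr⟩
    by_cases hx : x ∈ I
    · exact reach x hx
    · have hxO : x ∈ O := mem_O_of_not_mem_I I O hpart hx
      by_cases hex : ∃ j, 1 ≤ j ∧ (⇑σ)^[j] x ∈ I
      · -- the σ-orbit of x meets I: go to the first ingoing half-edge
        obtain ⟨hm1, hmI⟩ := Nat.find_spec hex
        set m := Nat.find hex with hm
        have hO : ∀ p, 1 ≤ p → p < m → (⇑σ)^[p] x ∈ O := fun p hp1 hpm =>
          mem_O_of_not_mem_I I O hpart (fun hpI => Nat.find_min hex hpm ⟨hp1, hpI⟩)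
        have hβm : (backward σ α I)^[m] x = (⇑σ)^[m] x :=
          beta_eq_sigma_of_O σ α I O hdisj hxO m hO m (le_refl _)
        obtain ⟨q', hq', hq'r⟩ := reach _ hmI
        refine ⟨q' + m, by omega, ?_⟩
        rw [Function.iterate_add_apply, hβm, hq'r]
      · -- the σ-orbit of x stays outgoing: use the left-path of α x
        push_neg at hex
        have allO : ∀ j, (⇑σ)^[j] x ∈ O := by
          intro j
          rcases Nat.eq_zero_or_pos j with h0 | h0
          · simpa [h0] using hxO
          · exact mem_O_of_not_mem_I I O hpart (hex j h0)
        have hzI : α x ∈ I := by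
          rw [← hIO] at hxO
          obtain ⟨w, hw, hwx⟩ := hxO
          rw [← hwx, hinv]
          exact hw
        obtain ⟨k, h, hp, hk⟩ := hL (α x) hzI
        obtain ⟨hk1, h0, hmem, -, hstep⟩ := hp
        obtain ⟨q1, hq1, hq1eq, -⟩ := hstep k hk1 (le_refl _)
        have hαα : α (h k) = x := by rw [hk, hinv]
        have hkO : h (k - 1) ∈ O := by
          rw [hq1eq, hαα]
          exact allO q1
        have hkeq : k = 1 := by
          by_contra hne
          have : h (k - 1) ∈ I := hmem (k - 1) (by omega) (by omega)
          exact not_mem_I_of_mem_O I O hdisj hkO this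
        have hr : r = (⇑σ)^[q1] x := by
          rw [← h0, show (0 : ℕ) = k - 1 from by omega, hq1eq, hαα]
        have hβq : (backward σ α I)^[q1] x = (⇑σ)^[q1] x :=
          beta_eq_sigma_of_O σ α I O hdisj hxO q1 (fun p _ _ => allO p) q1 (le_refl _)
        exact ⟨q1, hq1, by rw [hβq, ← hr]⟩
  · intro hR x hx
    have hexq : ∃ q, 0 < q ∧ (backward σ α I)^[q] x = r := hR x
    obtain ⟨hq1, hqr⟩ := Nat.find_spec hexq
    have hmin : ∀ j, 0 < j → j < Nat.find hexq → (backward σ α I)^[j] x ≠ r :=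
      fun j hj0 hjq hjr => Nat.find_min hexq hjq ⟨hj0, hjr⟩
    obtain ⟨k, h, hp, hk, -⟩ :=
      construct σ α hpart hdisj hIO (Nat.find hexq) hq1 x hx hqr hmin
    exact ⟨k, h, hp, hk⟩
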